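/- Let b be a monotone function on a complete lattice L and define t(x) = ⨅ { b_α | x ≤ b_α } using the final sequence of b. Then for every monotone function f : L → L, f ≤ t (pointwise) if and only if f(b_α) ≤ b_α for all ordinals α. -/

import Mathlib

theorem below_companion_iff_preserves_final_sequence {L : Type*} [CompleteLattice L]
    (b : L → L) (hb : Monotone b)
    (s : Ordinal → L) (h0 : s 0 = ⊤)
    (hsucc : ∀ α : Ordinal, s (α + 1) = b (s α))
    (hlim : ∀ α : Ordinal, Order.IsSuccLimit α → s α = ⨅ (β : Ordinal) (_ : β < α), s β)
    (t : L → L) (ht : ∀ x, t x = ⨅ (α : Ordinal) (_ : x ≤ s α), s α) :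
    ∀ f : L → L, Monotone f → ((∀ x, f x ≤ t x) ↔ ∀ α : Ordinal, f (s α) ≤ s α) := by
  intro f hf
  constructor
  · intro h α
    refine (h (s α)).trans ?_
    rw [ht]
    exact iInf_le_of_le α (iInf_le _ le_rfl)
  · intro h x
    rw [ht]
    exact le_iInf₂ fun α hx => (hf hx).trans (h α)
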